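/- Let k, m, n be positive integers with 2 ≤ k ≤ m, and for each 2 ≤ i ≤ k let n_i and m_i be natural numbers with m_i ≤ n_i, Σ_{i=2}^{k} n_i = n, and n_i − m_i ≤ (m choose i). Then Σ_{i=2}^{k} log₂ ( (m choose i) choose (n_i − m_i) ) ≥ Σ_{i=2}^{k} (n_i − m_i)·i·log₂(m/i) − n·log₂ n. -/

import Mathlib

open Finset Real

lemma factorial_prod (b : ℕ) : (Nat.factorial b) = ∏ i ∈ range b, (b - i) := by
  rw [← Finset.prod_range_add_one_eq_factorial,
    ← Finset.prod_range_reflect (fun i => i + 1) b]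
  apply Finset.prod_congr rfl
  intro i hi
  simp only [Finset.mem_range] at hi
  omega

lemma pow_div_le_choose (a b : ℕ) (hba : b ≤ a) :
    ((a : ℝ) / b) ^ b ≤ (a.choose b : ℝ) := by
  rcases Nat.eq_zero_or_pos b with hb | hb
  · simp [hb]
  have hb0 : (0:ℝ) < b := by exact_mod_cast hb
  have key : (a.choose b : ℝ) = ∏ i ∈ range b, ((a : ℝ) - i) / ((b : ℝ) - i) := by
    have h1 : (a.descFactorial b : ℝ) = (Nat.factorial b : ℝ) * (a.choose b : ℝ) := by
      exact_mod_cast congrArg (Nat.cast : ℕ → ℝ) (Nat.descFactorial_eq_factorial_mul_choose a b)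
    have h2 : (a.descFactorial b : ℝ) = ∏ i ∈ range b, ((a : ℝ) - i) := by
      rw [Nat.descFactorial_eq_prod_range]
      push_cast
      apply Finset.prod_congr rfl
      intro i hi
      simp only [Finset.mem_range] at hi
      rw [Nat.cast_sub (by omega)]
    have h3 : (Nat.factorial b : ℝ) = ∏ i ∈ range b, ((b : ℝ) - i) := by
      rw [factorial_prod]
      push_cast
      apply Finset.prod_congr rfl
      intro i hi
      simp only [Finset.mem_range] at hi
      rw [Nat.cast_sub (by omega)]
    have hbne : (Nat.factorial b : ℝ) ≠ 0 := by positivity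
    rw [h2, h3] at h1
    rw [Finset.prod_div_distrib, ← h2, ← h3, eq_div_iff hbne]
    rw [h2, h3]
    linear_combination -h1
  have hrw : ((a : ℝ) / b) ^ b = ∏ _i ∈ range b, ((a : ℝ) / b) := by rw [Finset.prod_const, Finset.card_range]
  rw [key, hrw]
  apply Finset.prod_le_prod
  · intro i _
    positivity
  · intro i hi
    simp only [Finset.mem_range] at hi
    have hia : (i : ℝ) < b := by exact_mod_cast hi
    have hab : (b : ℝ) ≤ a := by exact_mod_cast hba
    rw [div_le_div_iff₀ hb0 (by linarith)]
    nlinarith [Nat.cast_nonneg (α := ℝ) i]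

/-- The main inequality chain of the polygon-circle lower bound: for `2 ≤ k ≤ m`, `n > 0`,
counts `n_i` summing to `n` with `m_i ≤ n_i` and `n_i − m_i ≤ (m choose i)`,
`Σᵢ log₂ ((m choose i) choose (nᵢ − mᵢ)) ≥ Σᵢ (nᵢ − mᵢ)·i·log₂(m/i) − n log₂ n`. -/
theorem stmt13 (k m n : ℕ) (hk : 2 ≤ k) (hkm : k ≤ m) (hn : 0 < n)
    (ni mi : ℕ → ℕ)
    (hmi : ∀ i ∈ Finset.Icc 2 k, mi i ≤ ni i)
    (hsum : ∑ i ∈ Finset.Icc 2 k, ni i = n)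
    (hchoose : ∀ i ∈ Finset.Icc 2 k, ni i - mi i ≤ m.choose i) :
    ∑ i ∈ Finset.Icc 2 k, Real.logb 2 ((m.choose i).choose (ni i - mi i)) ≥
      (∑ i ∈ Finset.Icc 2 k, ((ni i - mi i : ℕ) : ℝ) * i * Real.logb 2 ((m : ℝ) / i))
        - (n : ℝ) * Real.logb 2 n := by
  have h2 : (1:ℝ) < 2 := one_lt_two
  -- termwise bound
  have hterm : ∀ i ∈ Finset.Icc 2 k,
      Real.logb 2 ((m.choose i).choose (ni i - mi i)) ≥
        ((ni i - mi i : ℕ) : ℝ) * i * Real.logb 2 ((m : ℝ) / i)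
          - ((ni i - mi i : ℕ) : ℝ) * Real.logb 2 ((ni i - mi i : ℕ) : ℝ) := by
    intro i hi
    simp only [Finset.mem_Icc] at hi
    set d := ni i - mi i with hd
    rcases Nat.eq_zero_or_pos d with hd0 | hd0
    · simp [hd0]
    have him : i ≤ m := le_trans hi.2 hkm
    have hi0 : (0:ℝ) < i := by exact_mod_cast lt_of_lt_of_le two_pos hi.1
    have hm0 : (0:ℝ) < m := by exact_mod_cast lt_of_lt_of_le (lt_of_lt_of_le two_pos hi.1) him
    have hdM : d ≤ m.choose i := hchoose i (by simp [Finset.mem_Icc, hi.1, hi.2])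
    have hM0 : 0 < m.choose i := lt_of_lt_of_le hd0 hdM
    have hd0' : (0:ℝ) < d := by exact_mod_cast hd0
    have hM0' : (0:ℝ) < m.choose i := by exact_mod_cast hM0
    -- step 1: choose (choose m i) d ≥ (choose m i / d)^d
    have h1 : ((m.choose i : ℝ) / d) ^ d ≤ ((m.choose i).choose d : ℝ) :=
      pow_div_le_choose _ _ hdM
    have hpow : (0:ℝ) < ((m.choose i : ℝ) / d) ^ d := by positivity
    have hlog1 : (d : ℝ) * Real.logb 2 ((m.choose i : ℝ) / d) ≤
        Real.logb 2 ((m.choose i).choose d) := by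
      rw [← Real.logb_pow]
      exact (Real.logb_le_logb h2 hpow (lt_of_lt_of_le hpow h1)).mpr h1
    -- step 2: choose m i ≥ (m/i)^i
    have h2' : ((m : ℝ) / i) ^ i ≤ (m.choose i : ℝ) := pow_div_le_choose _ _ him
    have hpow2 : (0:ℝ) < ((m : ℝ) / i) ^ i := by positivity
    have hlog2 : (i : ℝ) * Real.logb 2 ((m : ℝ) / i) ≤ Real.logb 2 (m.choose i : ℝ) := by
      rw [← Real.logb_pow]
      exact (Real.logb_le_logb h2 hpow2 (lt_of_lt_of_le hpow2 h2')).mpr h2'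
    have hsplit : Real.logb 2 ((m.choose i : ℝ) / d) =
        Real.logb 2 (m.choose i : ℝ) - Real.logb 2 (d : ℝ) :=
      Real.logb_div (ne_of_gt hM0') (ne_of_gt hd0')
    have := mul_le_mul_of_nonneg_left hlog2 (le_of_lt hd0')
    calc ((d : ℕ) : ℝ) * i * Real.logb 2 ((m : ℝ) / i)
          - (d : ℝ) * Real.logb 2 (d : ℝ)
        ≤ (d : ℝ) * Real.logb 2 (m.choose i : ℝ) - (d : ℝ) * Real.logb 2 (d : ℝ) := by
          push_cast
          nlinarith [this]
      _ = (d : ℝ) * Real.logb 2 ((m.choose i : ℝ) / d) := by rw [hsplit]; ring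
      _ ≤ Real.logb 2 ((m.choose i).choose d) := hlog1
  -- sum of d logb d ≤ n logb n
  have hsum2 : ∑ i ∈ Finset.Icc 2 k, ((ni i - mi i : ℕ) : ℝ) *
      Real.logb 2 ((ni i - mi i : ℕ) : ℝ) ≤ (n : ℝ) * Real.logb 2 n := by
    have : (n : ℝ) * Real.logb 2 n = ∑ i ∈ Finset.Icc 2 k, (ni i : ℝ) * Real.logb 2 n := by
      rw [← Finset.sum_mul]
      congr 1
      exact_mod_cast congrArg (Nat.cast : ℕ → ℝ) hsum.symm
    rw [this]
    apply Finset.sum_le_sum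
    intro i hi
    have hni : ni i ≤ n := hsum ▸ Finset.single_le_sum (f := ni) (fun _ _ => Nat.zero_le _) hi
    have hd : ni i - mi i ≤ ni i := Nat.sub_le _ _
    have hdn : ni i - mi i ≤ n := le_trans hd hni
    rcases Nat.eq_zero_or_pos (ni i - mi i) with h0 | h0
    · rw [h0]
      simp only [Nat.cast_zero, Real.logb_zero, mul_zero, zero_mul]
      have hln : (0:ℝ) ≤ Real.logb 2 n :=
        Real.logb_nonneg h2 (by exact_mod_cast hn)
      exact mul_nonneg (Nat.cast_nonneg _) hln
    · apply mul_le_mul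
      · exact_mod_cast hd
      · apply (Real.logb_le_logb h2 (by exact_mod_cast h0) (by exact_mod_cast hn)).mpr
        exact_mod_cast hdn
      · apply Real.logb_nonneg h2
        exact_mod_cast h0
      · positivity
  have hkey : ∑ i ∈ Finset.Icc 2 k, ((ni i - mi i : ℕ) : ℝ) * i * Real.logb 2 ((m : ℝ) / i)
      ≤ (∑ i ∈ Finset.Icc 2 k, Real.logb 2 ((m.choose i).choose (ni i - mi i)))
        + ∑ i ∈ Finset.Icc 2 k, ((ni i - mi i : ℕ) : ℝ) *
            Real.logb 2 ((ni i - mi i : ℕ) : ℝ) := by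
    rw [← Finset.sum_add_distrib]
    apply Finset.sum_le_sum
    intro i hi
    linarith [hterm i hi]
  rw [ge_iff_le, sub_le_iff_le_add]
  linarith [hkey, hsum2]
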